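/- Let N = 2 and let W ∈ U(4) be an arbitrary two-qubit unitary gate given (up to local unitaries) in canonical form W = diag-type matrix with entries parameterized by b₁, b₂, b₃ as in the Kraus–Cirac normal form. Then there exists a product state |x⟩ = |x_A⟩⊗|x_B⟩ such that W|x⟩ is also a product state; explicitly, if b₂ = 0 one can take |x⟩ = |0,1⟩, and if b₂ ≠ 0 one can take |x⟩ proportional to |0⟩ ⊗ (|0⟩ + e^{2ib₃}√(sin b₁ cos b₁ / (sin b₂ cos b₂)) |1⟩), provided sin b₁ cos b₁ / (sin b₂ cos b₂) ≥ 0. -/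

import Mathlib

/-- The Kronecker (tensor) product of two qubit states, as a vector in `ℂ⁴`
with the ordering `|00⟩,|01⟩,|10⟩,|11⟩`. -/
noncomputable def kron2 (a b : Fin 2 → ℂ) : Fin 4 → ℂ :=
  ![a 0 * b 0, a 0 * b 1, a 1 * b 0, a 1 * b 1]

lemma sq_half (z : ℂ) : z ^ ((1:ℂ)/2) * z ^ ((1:ℂ)/2) = z := by
  by_cases hz : z = 0
  · simp [hz, Complex.zero_cpow (by norm_num : (1:ℂ)/2 ≠ 0)]
  · rw [← Complex.cpow_add _ _ hz]
    norm_num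

lemma prod_of_det (v : Fin 4 → ℂ) (h : v 0 * v 3 = v 1 * v 2) :
    ∃ a b : Fin 2 → ℂ, v = kron2 a b := by
  by_cases h0 : v 0 = 0
  · by_cases h1 : v 1 = 0
    · exact ⟨![0, 1], ![v 2, v 3], by
        funext i; fin_cases i <;> simp [kron2, h0, h1]⟩
    · have h2 : v 2 = 0 := by
        have := h; rw [h0, zero_mul] at this
        rcases mul_eq_zero.mp this.symm with h' | h'
        · exact absurd h' h1
        · exact h'
      exact ⟨![v 1, v 3], ![0, 1], by
        funext i; fin_cases i <;> simp [kron2, h0, h2]⟩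
  · refine ⟨![v 0, v 2], ![1, v 1 / v 0], ?_⟩
    funext i; fin_cases i <;> simp [kron2]
    · field_simp
    · field_simp
      rw [mul_comm (v 2) (v 1), ← h]; ring

/-- For a two-qubit gate `W` in Kraus–Cirac canonical form there
exists a (nonzero) product state `|x⟩ = |x_A⟩ ⊗ |x_B⟩` such that `W|x⟩` is also
a product state. -/
theorem stmt8 (b₁ b₂ b₃ : ℝ)
    (W : Matrix (Fin 4) (Fin 4) ℂ)
    (hW : W = !![Complex.exp (Complex.I * b₃) * (Real.cos b₁ : ℝ), 0, 0,
                   Complex.I * Complex.exp (Complex.I * b₃) * (Real.sin b₁ : ℝ);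
                 0, Complex.exp (-(Complex.I * b₃)) * (Real.cos b₂ : ℝ),
                   Complex.I * Complex.exp (-(Complex.I * b₃)) * (Real.sin b₂ : ℝ), 0;
                 0, Complex.I * Complex.exp (-(Complex.I * b₃)) * (Real.sin b₂ : ℝ),
                   Complex.exp (-(Complex.I * b₃)) * (Real.cos b₂ : ℝ), 0;
                 Complex.I * Complex.exp (Complex.I * b₃) * (Real.sin b₁ : ℝ), 0, 0,
                   Complex.exp (Complex.I * b₃) * (Real.cos b₁ : ℝ)]) :
    ∃ a b : Fin 2 → ℂ, a ≠ 0 ∧ b ≠ 0 ∧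
      ∃ a' b' : Fin 2 → ℂ, W.mulVec (kron2 a b) = kron2 a' b' := by
  set E := Complex.exp (Complex.I * b₃) with hE
  set F := Complex.exp (-(Complex.I * b₃)) with hF
  set c1 := (Real.cos b₁ : ℂ)
  set s1 := (Real.sin b₁ : ℂ)
  set c2 := (Real.cos b₂ : ℂ)
  set s2 := (Real.sin b₂ : ℂ)
  set A := E ^ 2 * c1 * s1 with hA
  set B := F ^ 2 * c2 * s2 with hB
  by_cases hA0 : A = 0
  · refine ⟨![1, 0], ![1, 0], ?_, ?_, ?_⟩
    · intro h; have := congrFun h 0; simp at this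
    · intro h; have := congrFun h 0; simp at this
    · apply prod_of_det
      have hv : W.mulVec (kron2 ![1, 0] ![1, 0]) =
          ![E * c1, 0, 0, Complex.I * E * s1] := by
        funext i
        fin_cases i <;>
          simp [hW, kron2, Matrix.mulVec, dotProduct, Fin.sum_univ_four]
      rw [hv]
      simp only [Matrix.cons_val_zero, Matrix.cons_val_one, Matrix.head_cons,
        Matrix.cons_val_fin_one]
      show E * c1 * (Complex.I * E * s1) = 0 * 0
      have : E * c1 * (Complex.I * E * s1) = Complex.I * A := by rw [hA]; ring
      rw [this, hA0]; ring
  · set β := (B / A) ^ ((1:ℂ)/2) with hβ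
    refine ⟨![1, 0], ![β, 1], ?_, ?_, ?_⟩
    · intro h; have := congrFun h 0; simp at this
    · intro h; have := congrFun h 1; simp at this
    · apply prod_of_det
      have hv : W.mulVec (kron2 ![1, 0] ![β, 1]) =
          ![E * c1 * β, F * c2, Complex.I * F * s2, Complex.I * E * s1 * β] := by
        funext i
        fin_cases i <;>
          simp [hW, kron2, Matrix.mulVec, dotProduct, Fin.sum_univ_four] <;>
          ring
      rw [hv]
      show E * c1 * β * (Complex.I * E * s1 * β) = F * c2 * (Complex.I * F * s2)
      have hββ : β * β = B / A := sq_half _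
      have : E * c1 * β * (Complex.I * E * s1 * β) = Complex.I * A * (β * β) := by
        rw [hA]; ring
      rw [this, hββ]
      field_simp
      rw [hB]
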